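/- Let P be a probability measure on ℝ_+^T such that there exists Q ∈ ℳ equivalent to P. Then the set 𝒞_P is bounded in L⁰(P), i.e. sup_{c ∈ 𝒞_P} P(c > K) → 0 as K → ∞. -/

import Mathlib

open MeasureTheory Filter Topology Set
open scoped NNReal ENNReal

noncomputable section

/-- The dynamic part of a semi-static trading strategy: for each `j : Fin (T-1)`
(representing the paper's time index `j+1 ∈ {1,…,T-1}`), a function of the first
`j+1` stock prices `s_1,…,s_{j+1}`. -/
abbrev Strategy (T : ℕ) := (j : Fin (T - 1)) → (Fin (j.1 + 1) → ℝ≥0) → ℝ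

/-- Restriction of a path to its first `j+1` coordinates. -/
def restrictPath {T : ℕ} (j : Fin (T - 1)) (ω : Fin T → ℝ≥0) (k : Fin (j.1 + 1)) : ℝ≥0 :=
  ω ⟨k.1, by have h1 := j.isLt; have h2 := k.isLt; omega⟩

/-- Terminal gain `(Δ·S)_T = ∑_{j=1}^{T-1} Δ_j(s_1,…,s_j)(s_{j+1} - s_j)` of a dynamic
strategy (coordinate `i : Fin T` of a path is the stock price `s_{i+1}` at time `i+1`). -/
def stockGain {T : ℕ} (Δ : Strategy T) (ω : Fin T → ℝ≥0) : ℝ :=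
  ∑ j : Fin (T - 1), Δ j (restrictPath j ω) *
    ((ω ⟨j.1 + 1, by have := j.isLt; omega⟩ : ℝ) - (ω ⟨j.1, by have := j.isLt; omega⟩ : ℝ))

/-- Payoff `h·g` of a static option portfolio. -/
def optionGain {T N : ℕ} (g : Fin N → (Fin T → ℝ≥0) → ℝ) (h : Fin N → ℝ) (ω : Fin T → ℝ≥0) : ℝ :=
  ∑ i, h i * g i ω

/-- Terminal wealth `x + (Δ·S)_T + h·g` of a semi-static strategy with initial capital `x`. -/
def wealth {T N : ℕ} (g : Fin N → (Fin T → ℝ≥0) → ℝ) (x : ℝ) (Δ : Strategy T)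
    (h : Fin N → ℝ) (ω : Fin T → ℝ≥0) : ℝ :=
  x + stockGain Δ ω + optionGain g h ω

/-- The σ-algebra generated by the first `k` coordinates, i.e. by `S_1,…,S_k`
(the natural filtration of `S` at time `k`). -/
def Flt (T k : ℕ) : MeasurableSpace (Fin T → ℝ≥0) :=
  MeasurableSpace.comap
    (fun ω (i : Fin (min k T)) => ω ⟨i.1, lt_of_lt_of_le i.isLt (min_le_right k T)⟩) inferInstance

/-- The canonical process `S` is a `Q`-martingale in its natural filtration:
each `S_i` is integrable and `E_Q[S_{j+1} | S_1,…,S_j] = S_j` for `j = 1,…,T-1`. -/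
def IsMartingaleMeasure {T : ℕ} (Q : Measure (Fin T → ℝ≥0)) : Prop :=
  (∀ i : Fin T, Integrable (fun ω => (ω i : ℝ)) Q) ∧
  ∀ j : Fin T, ∀ hj : j.1 + 1 < T,
    Q[(fun ω => (ω ⟨j.1 + 1, hj⟩ : ℝ)) | Flt T (j.1 + 1)] =ᵐ[Q] fun ω => (ω j : ℝ)

/-- The set `ℳ` of martingale measures calibrated to the option prices (all zero). -/
def MartMeasures {T N : ℕ} (g : Fin N → (Fin T → ℝ≥0) → ℝ) : Set (Measure (Fin T → ℝ≥0)) :=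
  {Q | IsProbabilityMeasure Q ∧ IsMartingaleMeasure Q ∧
    ∀ i, Integrable (g i) Q ∧ ∫ ω, g i ω ∂Q = 0}

/-- Two measures are equivalent. -/
def MeasEquiv {Ω : Type*} [MeasurableSpace Ω] (P Q : Measure Ω) : Prop :=
  P ≪ Q ∧ Q ≪ P

/-- Gain `(Δ·S)_k` of a dynamic strategy up to time `k ∈ {0,…,T}`. -/
def stockGainUpTo {T : ℕ} (Δ : Strategy T) (k : ℕ) (ω : Fin T → ℝ≥0) : ℝ :=
  ∑ j : Fin (T - 1), if j.1 + 2 ≤ k then Δ j (restrictPath j ω) *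
    ((ω ⟨j.1 + 1, by have := j.isLt; omega⟩ : ℝ) - (ω ⟨j.1, by have := j.isLt; omega⟩ : ℝ)) else 0

/-- A process `Y` (indexed by the times `0,…,T`) is a `P`-supermartingale for the natural
filtration of `S`. -/
def IsSupermartingaleProc {T : ℕ} (P : Measure (Fin T → ℝ≥0))
    (Y : Fin (T + 1) → (Fin T → ℝ≥0) → ℝ) : Prop :=
  (∀ k : Fin (T + 1), Measurable[Flt T k.1] (Y k)) ∧
  (∀ k, Integrable (Y k) P) ∧
  ∀ k l : Fin (T + 1), k ≤ l → (P[Y l | Flt T k.1]) ≤ᵐ[P] Y k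

/-- The set `𝒴_P(y)`: nonnegative processes `Y` with `Y_0 = y` such that `X Y` is a
`P`-supermartingale for every admissible wealth process `X ∈ 𝔛_P(1,0)`. -/
def Yset {T : ℕ} (P : Measure (Fin T → ℝ≥0)) (y : ℝ) :
    Set (Fin (T + 1) → (Fin T → ℝ≥0) → ℝ) :=
  {Y | (∀ k, ∀ᵐ ω ∂P, 0 ≤ Y k ω) ∧ (∀ᵐ ω ∂P, Y 0 ω = y) ∧
    ∀ Δ : Strategy T, (∀ j, Measurable (Δ j)) → (∀ᵐ ω ∂P, 0 ≤ 1 + stockGain Δ ω) →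
      IsSupermartingaleProc P (fun k ω => (1 + stockGainUpTo Δ k.1 ω) * Y k ω)}

/-- The set `𝔜_P(y)`: elements of `𝒴_P(y)` with `E_P[Y_T (X_T + h·g)] ≤ x y` for every
`x > 0`, `h` and `X ∈ 𝔛_P(x,h)`. -/
def Yfrak {T N : ℕ} (P : Measure (Fin T → ℝ≥0)) (g : Fin N → (Fin T → ℝ≥0) → ℝ) (y : ℝ) :
    Set (Fin (T + 1) → (Fin T → ℝ≥0) → ℝ) :=
  {Y | Y ∈ Yset P y ∧ ∀ x : ℝ, 0 < x → ∀ h : Fin N → ℝ, ∀ Δ : Strategy T,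
      (∀ j, Measurable (Δ j)) → (∀ᵐ ω ∂P, 0 ≤ wealth g x Δ h ω) →
      ∫ ω, Y (Fin.last T) ω * wealth g x Δ h ω ∂P ≤ x * y}

/-- The set `𝒞_P(x)` of nonnegative claims in `L⁰_+(P)` dominated by the terminal wealth
of an admissible semi-static strategy with initial capital `x`. -/
def Cset {T N : ℕ} (P : Measure (Fin T → ℝ≥0)) (g : Fin N → (Fin T → ℝ≥0) → ℝ) (x : ℝ) :
    Set ((Fin T → ℝ≥0) → ℝ) :=
  {c | AEMeasurable c P ∧ (∀ᵐ ω ∂P, 0 ≤ c ω) ∧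
    ∃ Δ : Strategy T, ∃ h : Fin N → ℝ, (∀ j, Measurable (Δ j)) ∧
      (∀ᵐ ω ∂P, 0 ≤ wealth g x Δ h ω) ∧ (∀ᵐ ω ∂P, c ω ≤ wealth g x Δ h ω)}

/-- The set `𝒟_P(y)` of elements of `L⁰_+(P)` dominated by `Y_T` for some `Y ∈ 𝔜_P(y)`. -/
def Dset {T N : ℕ} (P : Measure (Fin T → ℝ≥0)) (g : Fin N → (Fin T → ℝ≥0) → ℝ) (y : ℝ) :
    Set ((Fin T → ℝ≥0) → ℝ) :=
  {d | AEMeasurable d P ∧ (∀ᵐ ω ∂P, 0 ≤ d ω) ∧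
    ∃ Y ∈ Yfrak P g y, ∀ᵐ ω ∂P, d ω ≤ Y (Fin.last T) ω}

section Helpers

open MeasurableSpace

lemma measurable_restrictPath {T : ℕ} (j : Fin (T - 1)) :
    Measurable (restrictPath (T := T) j) :=
  measurable_pi_lambda _ fun _ => measurable_pi_apply _

lemma measurable_coordR {T : ℕ} (i : Fin T) :
    Measurable (fun ω : Fin T → ℝ≥0 => (ω i : ℝ)) :=
  measurable_coe_nnreal_real.comp (measurable_pi_apply i)

lemma measurable_stockGain {T : ℕ} {Δ : Strategy T} (hΔ : ∀ j, Measurable (Δ j)) :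
    Measurable (stockGain Δ) := by
  apply Finset.measurable_sum
  intro j _
  exact ((hΔ j).comp (measurable_restrictPath j)).mul
    ((measurable_coordR _).sub (measurable_coordR _))

lemma Flt_le (T k : ℕ) : Flt T k ≤ (inferInstance : MeasurableSpace (Fin T → ℝ≥0)) :=
  (measurable_pi_lambda _ fun _ => measurable_pi_apply _).comap_le

lemma Flt_eq (T k : ℕ) (hk : k ≤ T) :
    Flt T k = MeasurableSpace.comap
      (fun (ω : Fin T → ℝ≥0) (i : Fin k) => ω ⟨i.1, lt_of_lt_of_le i.isLt hk⟩)
      inferInstance := by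
  have hmin : min k T = k := min_eq_left hk
  apply le_antisymm
  · rw [Flt]
    have hcomp : (fun (ω : Fin T → ℝ≥0) (i : Fin (min k T)) =>
          ω ⟨i.1, lt_of_lt_of_le i.isLt (min_le_right k T)⟩)
        = (fun (p : Fin k → ℝ≥0) (i : Fin (min k T)) => p ⟨i.1, by omega⟩) ∘
          (fun (ω : Fin T → ℝ≥0) (i : Fin k) => ω ⟨i.1, lt_of_lt_of_le i.isLt hk⟩) := rfl
    rw [hcomp, ← MeasurableSpace.comap_comp]
    exact MeasurableSpace.comap_mono
      (measurable_pi_lambda _ fun _ => measurable_pi_apply _).comap_le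
  · rw [Flt]
    have hcomp : (fun (ω : Fin T → ℝ≥0) (i : Fin k) =>
          ω ⟨i.1, lt_of_lt_of_le i.isLt hk⟩)
        = (fun (p : Fin (min k T) → ℝ≥0) (i : Fin k) => p ⟨i.1, by omega⟩) ∘
          (fun (ω : Fin T → ℝ≥0) (i : Fin (min k T)) =>
            ω ⟨i.1, lt_of_lt_of_le i.isLt (min_le_right k T)⟩) := rfl
    rw [hcomp, ← MeasurableSpace.comap_comp]
    exact MeasurableSpace.comap_mono
      (measurable_pi_lambda _ fun _ => measurable_pi_apply _).comap_le

end Helpers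
section Helpers2

/-- Set-integral form of the martingale property. -/
lemma mart_setIntegral {T : ℕ} {Q : Measure (Fin T → ℝ≥0)} [IsProbabilityMeasure Q]
    (hQ : IsMartingaleMeasure Q) (j : ℕ) (hj : j + 1 < T) {B : Set (Fin T → ℝ≥0)}
    (hB : MeasurableSet[Flt T (j + 1)] B) :
    ∫ ω in B, (ω ⟨j + 1, hj⟩ : ℝ) ∂Q = ∫ ω in B, (ω ⟨j, by omega⟩ : ℝ) ∂Q := by
  have hle : Flt T (j + 1) ≤ _ := Flt_le T (j + 1)
  haveI : SigmaFinite (Q.trim hle) := by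
    have : IsFiniteMeasure (Q.trim hle) := MeasureTheory.isFiniteMeasure_trim hle
    infer_instance
  have h1 := (setIntegral_condExp hle (hQ.1 ⟨j + 1, hj⟩) hB).symm
  have h2 : ∫ ω in B, (Q[(fun ω => (ω ⟨j + 1, hj⟩ : ℝ)) | Flt T (j + 1)]) ω ∂Q
      = ∫ ω in B, (ω ⟨j, by omega⟩ : ℝ) ∂Q := by
    refine setIntegral_congr_ae (hle _ hB) ?_
    exact (hQ.2 ⟨j, by omega⟩ hj).mono fun ω h _ => h
  rw [h1, h2]

lemma measurable_snocFun {m : ℕ} :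
    Measurable (fun p : (Fin m → ℝ≥0) × ℝ≥0 => (Fin.snoc p.1 p.2 : Fin (m + 1) → ℝ≥0)) := by
  apply measurable_pi_lambda
  intro i
  refine Fin.lastCases ?_ ?_ i
  · show Measurable fun p : (Fin m → ℝ≥0) × ℝ≥0 => (Fin.snoc p.1 p.2 : Fin (m+1) → ℝ≥0) (Fin.last m)
    simp only [Fin.snoc_last]; exact measurable_snd
  · intro i
    show Measurable fun p : (Fin m → ℝ≥0) × ℝ≥0 => (Fin.snoc p.1 p.2 : Fin (m+1) → ℝ≥0) i.castSucc
    simp only [Fin.snoc_castSucc]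
    exact (measurable_pi_apply i).comp measurable_fst

/-- The measurable equivalence splitting off the last coordinate. -/
def lastEquiv (m : ℕ) : (Fin (m + 1) → ℝ≥0) ≃ᵐ (Fin m → ℝ≥0) × ℝ≥0 where
  toFun ω := (Fin.init ω, ω (Fin.last m))
  invFun p := Fin.snoc p.1 p.2
  left_inv ω := Fin.snoc_init_self ω
  right_inv p := by ext <;> simp
  measurable_toFun :=
    (measurable_pi_lambda _ fun _ => measurable_pi_apply _).prodMk (measurable_pi_apply _)
  measurable_invFun := measurable_snocFun

end Helpers2
section KeyLemma

open ProbabilityTheory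

lemma integrable_integral_compProd' {α β : Type*} [MeasurableSpace α] [MeasurableSpace β]
    {ν : Measure α} [SFinite ν] {κ : ProbabilityTheory.Kernel α β} [ProbabilityTheory.IsSFiniteKernel κ]
    {f : α × β → ℝ} (hfm : StronglyMeasurable f) (hf : Integrable f (ν ⊗ₘ κ)) :
    Integrable (fun p => ∫ y, f (p, y) ∂κ p) ν := by
  have h2 := (Measure.integrable_compProd_iff hf.aestronglyMeasurable).mp hf
  refine h2.2.mono' hfm.integral_kernel_prod_right'.aestronglyMeasurable ?_
  refine Filter.Eventually.of_forall fun p => ?_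
  exact norm_integral_le_integral_norm _

lemma key_trivial {T : ℕ} (hT : T - 1 = 0) (Q : Measure (Fin T → ℝ≥0)) [IsProbabilityMeasure Q]
    {G : (Fin T → ℝ≥0) → ℝ} (hGi : Integrable G Q) (Δ : Strategy T)
    (hpos : ∀ᵐ ω ∂Q, 0 ≤ 1 + stockGain Δ ω + G ω) :
    ∫⁻ ω, ENNReal.ofReal (1 + stockGain Δ ω + G ω) ∂Q ≤ 1 + ENNReal.ofReal (∫ ω, G ω ∂Q) := by
  haveI : IsEmpty (Fin (T - 1)) := by rw [hT]; infer_instance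
  have hsg : ∀ ω, stockGain Δ ω = 0 := by
    intro ω; rw [stockGain, Finset.univ_eq_empty, Finset.sum_empty]
  have hint : Integrable (fun ω => 1 + stockGain Δ ω + G ω) Q := by
    have : (fun ω => 1 + stockGain Δ ω + G ω) = fun ω => 1 + G ω := by
      funext ω; rw [hsg]; ring
    rw [this]; exact (integrable_const 1).add hGi
  rw [← ofReal_integral_eq_lintegral_ofReal hint hpos]
  have : ∫ ω, (1 + stockGain Δ ω + G ω) ∂Q = 1 + ∫ ω, G ω ∂Q := by
    have h1 : (fun ω => 1 + stockGain Δ ω + G ω) = fun ω => 1 + G ω := by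
      funext ω; rw [hsg]; ring
    rw [h1, integral_add (integrable_const 1) hGi, integral_const]
    simp
  rw [this]
  exact le_trans ENNReal.ofReal_add_le (by simp)

end KeyLemma
section KeyMain

open ProbabilityTheory

def dropLast {m : ℕ} (Δ : Strategy (m + 2)) : Strategy (m + 1) :=
  fun j => Δ (Fin.castSucc j)

lemma stockGain_split {m : ℕ} (Δ : Strategy (m + 2)) (ω : Fin (m + 2) → ℝ≥0) :
    stockGain Δ ω = stockGain (dropLast Δ) (Fin.init ω)
      + Δ (Fin.last m) (Fin.init ω)
        * ((ω (Fin.last (m + 1)) : ℝ) - ((Fin.init ω) (Fin.last m) : ℝ)) := by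
  have h : stockGain Δ ω = ∑ j : Fin (m + 1),
      Δ j (restrictPath j ω) * ((ω ⟨j.1 + 1, by omega⟩ : ℝ) - (ω ⟨j.1, by omega⟩ : ℝ)) := rfl
  rw [h, Fin.sum_univ_castSucc]
  congr 1

lemma measurable_finInit {m : ℕ} : Measurable (Fin.init : (Fin (m + 1) → ℝ≥0) → Fin m → ℝ≥0) :=
  measurable_pi_lambda _ fun _ => measurable_pi_apply _

set_option maxHeartbeats 1000000 in
lemma key : ∀ (T : ℕ) (Q : Measure (Fin T → ℝ≥0)), IsProbabilityMeasure Q →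
    IsMartingaleMeasure Q → ∀ (G : (Fin T → ℝ≥0) → ℝ), StronglyMeasurable G →
    Integrable G Q → ∫ ω, G ω ∂Q = 0 → ∀ (Δ : Strategy T), (∀ j, Measurable (Δ j)) →
    (∀ᵐ ω ∂Q, 0 ≤ 1 + stockGain Δ ω + G ω) →
    ∫⁻ ω, ENNReal.ofReal (1 + stockGain Δ ω + G ω) ∂Q ≤ 1 := by
  intro T
  induction T with
  | zero =>
    intro Q hP hM G hGm hGi hG0 Δ hΔ hpos
    haveI := hP
    simpa [hG0] using key_trivial rfl Q hGi Δ hpos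
  | succ n IH =>
    cases n with
    | zero =>
      intro Q hP hM G hGm hGi hG0 Δ hΔ hpos
      haveI := hP
      simpa [hG0] using key_trivial rfl Q hGi Δ hpos
    | succ m =>
      intro Q hP hM G hGm hGi hG0 Δ hΔ hpos
      haveI := hP
      set e := lastEquiv (m + 1) with he
      set μ : Measure ((Fin (m + 1) → ℝ≥0) × ℝ≥0) := Q.map e with hμ
      haveI : IsProbabilityMeasure μ := Measure.isProbabilityMeasure_map e.measurable.aemeasurable
      set ν := μ.fst with hνdef
      haveI : IsProbabilityMeasure ν := by rw [hνdef]; infer_instance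
      set κ := μ.condKernel with hκ
      have hdis : ν ⊗ₘ κ = μ := μ.disintegrate μ.condKernel
      have hν : ν = Q.map Fin.init := by
        rw [hνdef, hμ, Measure.fst, Measure.map_map measurable_fst e.measurable]
        rfl
      have hcoordν : ∀ i : Fin (m + 1), Integrable (fun p : Fin (m + 1) → ℝ≥0 => (p i : ℝ)) ν := by
        intro i
        rw [hν]
        refine (integrable_map_measure (measurable_coordR i).aestronglyMeasurable
          measurable_finInit.aemeasurable).mpr ?_
        exact hM.1 ⟨i.1, by omega⟩
      set Δ' : Strategy (m + 1) := dropLast Δ with hΔ'def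
      have hΔ'm : ∀ j, Measurable (Δ' j) := fun j => hΔ _
      set f : (Fin (m + 1) → ℝ≥0) → ℝ := Δ (Fin.last m) with hfdef
      have hfm : Measurable f := hΔ _
      have hdec : ∀ ω : Fin (m + 2) → ℝ≥0, 1 + stockGain Δ ω + G ω
          = 1 + stockGain Δ' (Fin.init ω)
            + (f (Fin.init ω) * ((ω (Fin.last (m + 1)) : ℝ) - ((Fin.init ω) (Fin.last m) : ℝ))
               + G ω) := by
        intro ω
        rw [hΔ'def, hfdef, stockGain_split Δ ω]
        ring
      set F : (Fin (m + 1) → ℝ≥0) × ℝ≥0 → ℝ := fun z => 1 + stockGain Δ' z.1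
          + (f z.1 * ((z.2 : ℝ) - (z.1 (Fin.last m) : ℝ)) + G (Fin.snoc z.1 z.2)) with hF
      have hFe : ∀ ω, F (e ω) = 1 + stockGain Δ ω + G ω := by
        intro ω
        rw [hdec ω]
        show 1 + stockGain Δ' (Fin.init ω)
            + (f (Fin.init ω) * ((ω (Fin.last (m + 1)) : ℝ) - ((Fin.init ω) (Fin.last m) : ℝ))
              + G (Fin.snoc (Fin.init ω) (ω (Fin.last (m + 1))))) = _
        rw [Fin.snoc_init_self]
      have hGsm' : StronglyMeasurable
          (fun z : (Fin (m + 1) → ℝ≥0) × ℝ≥0 => G (Fin.snoc z.1 z.2)) :=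
        hGm.comp_measurable measurable_snocFun
      have hFmeas : Measurable F := by
        apply Measurable.add
        · exact measurable_const.add ((measurable_stockGain hΔ'm).comp measurable_fst)
        · apply Measurable.add
          · exact ((hfm.comp measurable_fst).mul
              ((measurable_coe_nnreal_real.comp measurable_snd).sub
                ((measurable_coordR (Fin.last m)).comp measurable_fst)))
          · exact hGsm'.measurable
      have hGμ : Integrable (fun z : (Fin (m + 1) → ℝ≥0) × ℝ≥0 => G (Fin.snoc z.1 z.2)) μ := by
        rw [hμ, MeasureTheory.integrable_map_equiv e]
        have hco : (fun z : (Fin (m + 1) → ℝ≥0) × ℝ≥0 => G (Fin.snoc z.1 z.2)) ∘ e = G := by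
          funext ω
          show G (Fin.snoc (Fin.init ω) (ω (Fin.last (m + 1)))) = G ω
          rw [Fin.snoc_init_self]
        rw [hco]; exact hGi
      have hyμ : Integrable (fun z : (Fin (m + 1) → ℝ≥0) × ℝ≥0 => (z.2 : ℝ)) μ := by
        rw [hμ, MeasureTheory.integrable_map_equiv e]
        exact hM.1 (Fin.last (m + 1))
      have hGc : Integrable (fun z : (Fin (m + 1) → ℝ≥0) × ℝ≥0 => G (Fin.snoc z.1 z.2)) (ν ⊗ₘ κ) := by
        rw [hdis]; exact hGμ
      have hyc : Integrable (fun z : (Fin (m + 1) → ℝ≥0) × ℝ≥0 => (z.2 : ℝ)) (ν ⊗ₘ κ) := by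
        rw [hdis]; exact hyμ
      have hGslice : ∀ᵐ p ∂ν, Integrable (fun y => G (Fin.snoc p y)) (κ p) :=
        ((Measure.integrable_compProd_iff hGc.aestronglyMeasurable).mp hGc).1
      have hyslice : ∀ᵐ p ∂ν, Integrable (fun y : ℝ≥0 => (y : ℝ)) (κ p) :=
        ((Measure.integrable_compProd_iff hyc.aestronglyMeasurable).mp hyc).1
      have hposμ : ∀ᵐ z ∂μ, 0 ≤ F z := by
        rw [hμ, MeasureTheory.ae_map_iff e.measurable.aemeasurable
          (measurableSet_le measurable_const hFmeas)]
        filter_upwards [hpos] with ω h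
        show 0 ≤ F (e ω)
        rw [hFe ω]; exact h
      have hposslice : ∀ᵐ p ∂ν, ∀ᵐ y ∂κ p, 0 ≤ F (p, y) :=
        Measure.ae_ae_of_ae_compProd (by rw [hdis]; exact hposμ)
      have hzsm : StronglyMeasurable (fun z : (Fin (m + 1) → ℝ≥0) × ℝ≥0 => (z.2 : ℝ)) :=
        (measurable_coe_nnreal_real.comp measurable_snd).stronglyMeasurable
      have hmeanν : (fun p => ∫ y, (y : ℝ) ∂κ p) =ᵐ[ν] fun p => (p (Fin.last m) : ℝ) := by
        have hint1 : Integrable (fun p => ∫ y, (y : ℝ) ∂κ p) ν :=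
          integrable_integral_compProd' hzsm hyc
        refine ae_eq_of_forall_setIntegral_eq_of_sigmaFinite
          (fun s _ _ => hint1.integrableOn) (fun s _ _ => (hcoordν (Fin.last m)).integrableOn) ?_
        intro A hA _
        have h1 : ∫ p in A, (∫ y, (y : ℝ) ∂κ p) ∂ν
            = ∫ z in A ×ˢ Set.univ, (z.2 : ℝ) ∂(ν ⊗ₘ κ) := by
          rw [Measure.setIntegral_compProd hA MeasurableSet.univ hyc.integrableOn]
          simp [Measure.restrict_univ]
        have h2 : ∫ z in A ×ˢ Set.univ, (z.2 : ℝ) ∂(ν ⊗ₘ κ)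
            = ∫ ω in Fin.init ⁻¹' A, (ω (Fin.last (m + 1)) : ℝ) ∂Q := by
          rw [hdis, hμ, setIntegral_map (hA.prod MeasurableSet.univ) hzsm.aestronglyMeasurable
            e.measurable.aemeasurable]
          have hset : (⇑e) ⁻¹' (A ×ˢ Set.univ) = Fin.init ⁻¹' A := by
            ext ω
            simp only [Set.mem_preimage, Set.mem_prod, Set.mem_univ, and_true]
            exact Iff.rfl
          rw [hset]
          rfl
        have hBm : MeasurableSet[Flt (m + 2) (m + 1)] (Fin.init ⁻¹' A) := by
          rw [Flt_eq (m + 2) (m + 1) (by omega)]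
          exact ⟨A, hA, rfl⟩
        have h3 := mart_setIntegral hM m (by omega) hBm
        have h4 : ∫ ω in Fin.init ⁻¹' A, (ω ⟨m, by omega⟩ : ℝ) ∂Q
            = ∫ p in A, (p (Fin.last m) : ℝ) ∂ν := by
          rw [hν, setIntegral_map hA (measurable_coordR (Fin.last m)).aestronglyMeasurable
            measurable_finInit.aemeasurable]
          rfl
        rw [h1]
        exact h2.trans (h3.trans h4)
      set Gn : (Fin (m + 1) → ℝ≥0) → ℝ := fun p =>
        f p * ((∫ y, (y : ℝ) ∂κ p) - (p (Fin.last m) : ℝ)) + ∫ y, G (Fin.snoc p y) ∂κ p with hGn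
      have hGnm : StronglyMeasurable Gn := by
        apply StronglyMeasurable.add
        · exact (hfm.stronglyMeasurable.mul
            (((stronglyMeasurable_id.comp_measurable
              (measurable_coe_nnreal_real.comp measurable_snd)).integral_kernel_prod_right' (κ := κ)).sub
              (measurable_coordR (Fin.last m)).stronglyMeasurable))
        · exact hGsm'.integral_kernel_prod_right'
      have hGbar : Gn =ᵐ[ν] fun p => ∫ y, G (Fin.snoc p y) ∂κ p := by
        filter_upwards [hmeanν] with p hp
        rw [hGn]
        show f p * ((∫ y, (y : ℝ) ∂κ p) - (p (Fin.last m) : ℝ)) + ∫ y, G (Fin.snoc p y) ∂κ p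
            = ∫ y, G (Fin.snoc p y) ∂κ p
        rw [hp, sub_self, mul_zero, zero_add]
      have hGni : Integrable Gn ν := by
        refine (integrable_integral_compProd' hGsm' hGc).congr hGbar.symm
      have hGn0 : ∫ p, Gn p ∂ν = 0 := by
        rw [integral_congr_ae hGbar]
        have h1 : ∫ p, (∫ y, G (Fin.snoc p y) ∂κ p) ∂ν
            = ∫ z, G (Fin.snoc z.1 z.2) ∂(ν ⊗ₘ κ) := (Measure.integral_compProd hGc).symm
        rw [h1, hdis, hμ, MeasureTheory.integral_map_equiv]
        have hco : ∀ ω, G (Fin.snoc (Fin.init ω) (ω (Fin.last (m + 1)))) = G ω := by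
          intro ω; rw [Fin.snoc_init_self]
        calc ∫ ω, G (Fin.snoc (Fin.init ω) (ω (Fin.last (m + 1)))) ∂Q
            = ∫ ω, G ω ∂Q := integral_congr_ae (Filter.Eventually.of_forall hco)
          _ = 0 := hG0
      have hmartν : IsMartingaleMeasure ν := by
        refine ⟨hcoordν, ?_⟩
        intro j hj
        have hle : Flt (m + 1) (j.1 + 1)
            ≤ (inferInstance : MeasurableSpace (Fin (m + 1) → ℝ≥0)) := Flt_le _ _
        haveI : SigmaFinite (ν.trim hle) := by
          haveI : IsFiniteMeasure (ν.trim hle) := MeasureTheory.isFiniteMeasure_trim hle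
          infer_instance
        refine (ae_eq_condExp_of_forall_setIntegral_eq hle (hcoordν ⟨j.1 + 1, hj⟩)
          (fun s _ _ => (hcoordν j).integrableOn) ?_ ?_).symm
        · intro s hs _
          rw [Flt_eq (m + 1) (j.1 + 1) (by omega)] at hs
          obtain ⟨u, hu, hus⟩ := hs
          have hsm : MeasurableSet s := by
            rw [← hus]
            exact (measurable_pi_lambda _ fun i => measurable_pi_apply _) hu
          have e1 : ∫ p in s, (p j : ℝ) ∂ν
              = ∫ ω in Fin.init ⁻¹' s, (ω ⟨j.1, by omega⟩ : ℝ) ∂Q := by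
            rw [hν, setIntegral_map hsm (measurable_coordR j).aestronglyMeasurable
              measurable_finInit.aemeasurable]
            rfl
          have e2 : ∫ p in s, (p ⟨j.1 + 1, hj⟩ : ℝ) ∂ν
              = ∫ ω in Fin.init ⁻¹' s, (ω ⟨j.1 + 1, by omega⟩ : ℝ) ∂Q := by
            rw [hν, setIntegral_map hsm (measurable_coordR ⟨j.1 + 1, hj⟩).aestronglyMeasurable
              measurable_finInit.aemeasurable]
            rfl
          have hBm : MeasurableSet[Flt (m + 2) (j.1 + 1)] (Fin.init ⁻¹' s) := by
            rw [Flt_eq (m + 2) (j.1 + 1) (by omega)]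
            refine ⟨u, hu, ?_⟩
            rw [← hus]
            rfl
          have e3 := mart_setIntegral hM j.1 (by omega) hBm
          rw [e1, e2]
          exact e3.symm
        · refine StronglyMeasurable.aestronglyMeasurable ?_
          rw [Flt_eq (m + 1) (j.1 + 1) (by omega)]
          apply Measurable.stronglyMeasurable
          exact Measurable.comp (g := fun q : Fin (j.1 + 1) → ℝ≥0 => (q ⟨j.1, Nat.lt_succ_self _⟩ : ℝ))
            (f := fun (ω : Fin (m + 1) → ℝ≥0) (i : Fin (j.1 + 1)) =>
              ω ⟨i.1, lt_of_lt_of_le i.isLt (by omega)⟩)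
            (measurable_coordR _) (measurable_iff_comap_le.mpr le_rfl)
      have hslice : ∀ᵐ p ∂ν, ∫⁻ y, ENNReal.ofReal (F (p, y)) ∂κ p
          = ENNReal.ofReal (1 + stockGain Δ' p + Gn p) ∧ 0 ≤ 1 + stockGain Δ' p + Gn p := by
        filter_upwards [hposslice, hGslice, hyslice] with p h1 h2 h3
        haveI : IsProbabilityMeasure (κ p) := inferInstance
        have h4 : (fun y => F (p, y)) = fun y : ℝ≥0 =>
            (1 + stockGain Δ' p) + (f p * ((y : ℝ) - (p (Fin.last m) : ℝ)) + G (Fin.snoc p y)) := by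
          funext y; rw [hF]
        have hsub : Integrable (fun y : ℝ≥0 => ((y : ℝ) - (p (Fin.last m) : ℝ))) (κ p) :=
          h3.sub (integrable_const _)
        have hmul : Integrable
            (fun y : ℝ≥0 => f p * ((y : ℝ) - (p (Fin.last m) : ℝ))) (κ p) := hsub.const_mul _
        have hadd : Integrable
            (fun y : ℝ≥0 => f p * ((y : ℝ) - (p (Fin.last m) : ℝ)) + G (Fin.snoc p y)) (κ p) :=
          hmul.add h2
        have hintF : Integrable (fun y => F (p, y)) (κ p) := by
          rw [h4]
          exact (integrable_const _).add hadd
        have hI : ∫ y, F (p, y) ∂κ p = 1 + stockGain Δ' p + Gn p := by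
          rw [h4, integral_add (integrable_const (1 + stockGain Δ' p)) hadd,
            integral_add hmul h2, integral_const_mul, integral_sub h3 (integrable_const _),
            integral_const, integral_const, hGn]
          simp only [probReal_univ, measure_univ, ENNReal.toReal_one, one_smul, smul_eq_mul, one_mul]
        refine ⟨?_, ?_⟩
        · rw [← ofReal_integral_eq_lintegral_ofReal hintF h1, hI]
        · rw [← hI]; exact integral_nonneg_of_ae h1
      calc ∫⁻ ω, ENNReal.ofReal (1 + stockGain Δ ω + G ω) ∂Q
          = ∫⁻ z, ENNReal.ofReal (F z) ∂μ := by
            rw [hμ, lintegral_map_equiv]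
            exact lintegral_congr fun ω => by rw [hFe ω]
        _ = ∫⁻ p, ∫⁻ y, ENNReal.ofReal (F (p, y)) ∂κ p ∂ν := by
            rw [← hdis, Measure.lintegral_compProd (show Measurable fun z : (Fin (m + 1) → ℝ≥0) × ℝ≥0 => ENNReal.ofReal (F z) from ENNReal.measurable_ofReal.comp hFmeas)]
        _ = ∫⁻ p, ENNReal.ofReal (1 + stockGain Δ' p + Gn p) ∂ν :=
            lintegral_congr_ae (hslice.mono fun p h => h.1)
        _ ≤ 1 := IH ν ‹_› hmartν Gn hGnm hGni hGn0 Δ' hΔ'm (hslice.mono fun p h => h.2)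

end KeyMain
set_option maxHeartbeats 1000000

/-- If `P` admits an equivalent martingale measure `Q ∈ ℳ`, then the set
`𝒞_P = 𝒞_P(1)` is bounded in `L⁰(P)`: `sup_{c ∈ 𝒞_P} P(c > K) → 0` as `K → ∞`. -/
theorem Cset_bounded_in_L0
    (T N : ℕ) (g : Fin N → (Fin T → ℝ≥0) → ℝ) (hg : ∀ i, Continuous (g i))
    (P : Measure (Fin T → ℝ≥0)) [IsProbabilityMeasure P]
    (hQ : ∃ Q ∈ MartMeasures g, MeasEquiv P Q) :
    Tendsto (fun K : ℝ => ⨆ c ∈ Cset P g 1, P {ω | K < c ω}) atTop (𝓝 0) := by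
  obtain ⟨Q, ⟨hQprob, hQmart, hQcal⟩, hPQ, hQP⟩ := hQ
  haveI := hQprob
  -- Step 1: uniform bound on the Q-expectation of elements of the class.
  have hbound : ∀ c ∈ Cset P g 1, ∫⁻ ω, ENNReal.ofReal (c ω) ∂Q ≤ 1 := by
    rintro c ⟨hcm, hc0, Δ, h, hΔm, hW0, hcW⟩
    have hGm : StronglyMeasurable (optionGain g h) :=
      (continuous_finset_sum _ fun i _ => continuous_const.mul (hg i)).stronglyMeasurable
    have hGint : Integrable (optionGain g h) Q :=
      integrable_finset_sum _ fun i _ => ((hQcal i).1.const_mul (h i))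
    have hG0 : ∫ ω, optionGain g h ω ∂Q = 0 := by
      have h1 : ∫ ω, optionGain g h ω ∂Q = ∑ i, ∫ ω, h i * g i ω ∂Q :=
        integral_finset_sum _ fun i _ => ((hQcal i).1.const_mul (h i))
      rw [h1]
      refine Finset.sum_eq_zero fun i _ => ?_
      rw [integral_const_mul, (hQcal i).2, mul_zero]
    have hW0Q : ∀ᵐ ω ∂Q, 0 ≤ wealth g 1 Δ h ω := hW0.filter_mono hQP.ae_le
    have hcWQ : ∀ᵐ ω ∂Q, c ω ≤ wealth g 1 Δ h ω := hcW.filter_mono hQP.ae_le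
    have hkey := key T Q hQprob hQmart (optionGain g h) hGm hGint hG0 Δ hΔm hW0Q
    calc ∫⁻ ω, ENNReal.ofReal (c ω) ∂Q
        ≤ ∫⁻ ω, ENNReal.ofReal (wealth g 1 Δ h ω) ∂Q :=
          lintegral_mono_ae (hcWQ.mono fun ω h' => ENNReal.ofReal_le_ofReal h')
      _ ≤ 1 := hkey
  -- Step 2: uniform Markov bound under Q.
  have hmarkov : ∀ c ∈ Cset P g 1, ∀ K : ℝ, 0 < K →
      Q {ω | K < c ω} ≤ (ENNReal.ofReal K)⁻¹ := by
    intro c hc K hK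
    have hcmQ : AEMeasurable c Q := hc.1.mono_ac hQP
    have hsub : {ω | K < c ω} ⊆ {ω | ENNReal.ofReal K ≤ ENNReal.ofReal (c ω)} :=
      fun ω hω => ENNReal.ofReal_le_ofReal (le_of_lt hω)
    calc Q {ω | K < c ω} ≤ Q {ω | ENNReal.ofReal K ≤ ENNReal.ofReal (c ω)} :=
          measure_mono hsub
      _ ≤ (∫⁻ ω, ENNReal.ofReal (c ω) ∂Q) / ENNReal.ofReal K :=
          meas_ge_le_lintegral_div (ENNReal.measurable_ofReal.comp_aemeasurable hcmQ)
            (ne_of_gt (ENNReal.ofReal_pos.mpr hK)) ENNReal.ofReal_ne_top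
      _ ≤ 1 / ENNReal.ofReal K := by
          gcongr
          exact hbound c hc
      _ = (ENNReal.ofReal K)⁻¹ := one_div _
  -- Step 3: uniform absolute continuity of P with respect to Q.
  have hwd : Q.withDensity (P.rnDeriv Q) = P := by
    haveI : IsProbabilityMeasure Q := hQprob
    haveI := Measure.haveLebesgueDecomposition_of_sigmaFinite P Q
    exact Measure.withDensity_rnDeriv_eq P Q hPQ
  have hrnint : ∫⁻ ω, P.rnDeriv Q ω ∂Q ≠ ∞ := by
    have h1 : ∫⁻ ω, P.rnDeriv Q ω ∂Q = P Set.univ := by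
      conv_rhs => rw [← hwd]
      rw [withDensity_apply _ MeasurableSet.univ, Measure.restrict_univ]
    rw [h1]
    simp
  rw [ENNReal.tendsto_nhds_zero]
  intro ε hε
  obtain ⟨δ, hδ0, hδ⟩ := exists_pos_setLIntegral_lt_of_measure_lt (μ := Q) hrnint hε.ne'
  obtain ⟨n, hn⟩ := ENNReal.exists_inv_nat_lt hδ0.ne'
  filter_upwards [Filter.eventually_ge_atTop ((n : ℝ) + 1)] with K hK
  refine iSup₂_le fun c hc => ?_
  have hK0 : (0 : ℝ) < K := lt_of_lt_of_le (by positivity) hK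
  have hcc'P : c =ᵐ[P] hc.1.mk c := hc.1.ae_eq_mk
  have hcc'Q : c =ᵐ[Q] hc.1.mk c := hcc'P.filter_mono hQP.ae_le
  have hc'meas : Measurable (hc.1.mk c) := hc.1.measurable_mk
  have hPeq : P {ω | K < c ω} = P {ω | K < hc.1.mk c ω} :=
    measure_congr (hcc'P.mono fun ω h' => by
      show (K < c ω) = (K < hc.1.mk c ω); rw [h'])
  have hQeq : Q {ω | K < hc.1.mk c ω} = Q {ω | K < c ω} :=
    (measure_congr (hcc'Q.mono fun ω h' => by
      show (K < c ω) = (K < hc.1.mk c ω); rw [h'])).symm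
  have hQc' : Q {ω | K < hc.1.mk c ω} < δ := by
    rw [hQeq]
    refine lt_of_le_of_lt (hmarkov c hc K hK0) (lt_of_le_of_lt ?_ hn)
    refine ENNReal.inv_le_inv.mpr ?_
    calc (n : ℝ≥0∞) = ENNReal.ofReal (n : ℝ) := (ENNReal.ofReal_natCast n).symm
      _ ≤ ENNReal.ofReal K := ENNReal.ofReal_le_ofReal (by linarith)
  calc P {ω | K < c ω} = P {ω | K < hc.1.mk c ω} := hPeq
    _ = ∫⁻ ω in {ω | K < hc.1.mk c ω}, P.rnDeriv Q ω ∂Q := by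
        have hP_repr : ∀ s : Set (Fin T → ℝ≥0), MeasurableSet s →
            P s = ∫⁻ ω in s, P.rnDeriv Q ω ∂Q := by
          intro s hs
          conv_lhs => rw [← hwd]
          rw [withDensity_apply _ hs]
        exact hP_repr _ (measurableSet_lt measurable_const hc'meas)
    _ ≤ ε := le_of_lt (hδ _ hQc')
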